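/- Let A be a d × n matrix over an algebraically closed field k of characteristic ≠ 2 whose columns are pairwise orthogonal for the standard bilinear form. Let p be the number of anisotropic columns and q the dimension of the span of the isotropic columns. Then p + q = rank(A) ≤ n and p + 2q ≤ d. -/

import Mathlib

open Module

theorem rank_ani_iso_of_orthogonal_columns
    (k : Type*) [Field k] [IsAlgClosed k] (hchar : (2 : k) ≠ 0)
    (d n : ℕ) (A : Matrix (Fin d) (Fin n) k)
    (horth : ∀ j j' : Fin n, j ≠ j' →
      dotProduct (fun i => A i j) (fun i => A i j') = 0)
    (p q : ℕ)
    (hp : p = finrank k (Submodule.span k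
      {v : Fin d → k | ∃ j : Fin n, v = (fun i => A i j) ∧
        dotProduct (fun i => A i j) (fun i => A i j) ≠ 0}))
    (hq : q = finrank k (Submodule.span k
      {v : Fin d → k | ∃ j : Fin n, v = (fun i => A i j) ∧
        dotProduct (fun i => A i j) (fun i => A i j) = 0})) :
    p + q = A.rank ∧ A.rank ≤ n ∧ p + 2 * q ≤ d := by
  classical
  set Sa : Set (Fin d → k) := {v : Fin d → k | ∃ j : Fin n, v = (fun i => A i j) ∧
      dotProduct (fun i => A i j) (fun i => A i j) ≠ 0} with hSa
  set Si : Set (Fin d → k) := {v : Fin d → k | ∃ j : Fin n, v = (fun i => A i j) ∧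
      dotProduct (fun i => A i j) (fun i => A i j) = 0} with hSi
  set B : LinearMap.BilinForm k (Fin d → k) :=
    Matrix.toBilin' (1 : Matrix (Fin d) (Fin d) k) with hB
  have hBapp : ∀ v w : Fin d → k, B v w = dotProduct v w := by
    intro v w
    simp [hB, Matrix.toBilin'_apply', Matrix.mulVec_one]
  have hrefl : B.IsRefl := by
    intro v w h
    rw [hBapp] at h ⊢
    rwa [dotProduct_comm]
  have hnd : B.Nondegenerate :=
    (Matrix.nondegenerate_of_det_ne_zero (by simp)).toBilin'
  -- distinct columns are orthogonal
  have hdist : ∀ v ∈ Sa ∪ Si, ∀ w ∈ Sa ∪ Si, v ≠ w → dotProduct v w = 0 := by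
    rintro v hv w hw hvw
    obtain ⟨j, rfl, -⟩ : ∃ j : Fin n, v = (fun i => A i j) ∧ True := by
      rcases hv with ⟨j, h, -⟩ | ⟨j, h, -⟩ <;> exact ⟨j, h, trivial⟩
    obtain ⟨j', rfl, -⟩ : ∃ j' : Fin n, w = (fun i => A i j') ∧ True := by
      rcases hw with ⟨j', h, -⟩ | ⟨j', h, -⟩ <;> exact ⟨j', h, trivial⟩
    exact horth j j' (fun h => hvw (by rw [h]))
  -- an anisotropic and an isotropic column are always orthogonal
  have hai : ∀ v ∈ Sa, ∀ w ∈ Si, dotProduct v w = 0 := by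
    rintro v hv w hw
    by_cases hvw : v = w
    · rcases hv with ⟨j, rfl, hj⟩
      rcases hw with ⟨j', h', hj'⟩
      exact absurd (by rw [hvw, h']; exact hj') hj
    · exact hdist v (Or.inl hv) w (Or.inr hw) hvw
  have hii : ∀ v ∈ Si, ∀ w ∈ Si, dotProduct v w = 0 := by
    rintro v hv w hw
    by_cases hvw : v = w
    · rcases hw with ⟨j', rfl, hj'⟩
      rw [hvw]; exact hj'
    · exact hdist v (Or.inr hv) w (Or.inr hw) hvw
  set Ua := Submodule.span k Sa with hUa
  set Ui := Submodule.span k Si with hUi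
  -- membership in an orthogonal complement from generators
  have key : ∀ (S : Set (Fin d → k)) (v : Fin d → k),
      (∀ w ∈ S, dotProduct w v = 0) →
      v ∈ B.orthogonal (Submodule.span k S) := by
    intro S v hv
    intro w hw
    have hle : Submodule.span k S ≤ LinearMap.ker (B.flip v) := by
      rw [Submodule.span_le]
      intro u hu
      show B u v = 0
      rw [hBapp]
      exact hv u hu
    show B w v = 0
    exact hle hw
  -- Ui is contained in the orthogonal of Ua
  have hUiUa : Ui ≤ B.orthogonal Ua := by
    rw [hUi, Submodule.span_le]
    intro w hw
    exact key Sa w (fun u hu => hai u hu w hw)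
  -- Ua ⊔ Ui ≤ orthogonal of Ui
  have hsupUi : Ua ⊔ Ui ≤ B.orthogonal Ui := by
    rw [hUa, hUi, ← Submodule.span_union, Submodule.span_le]
    intro v hv
    refine key Si v (fun w hw => ?_)
    rcases hv with hv | hv
    · rw [dotProduct_comm]; exact hai v hv w hw
    · exact hii w hw v hv
  -- Ua ⊓ Ui = ⊥
  have hdisj : Ua ⊓ Ui = ⊥ := by
    rw [eq_bot_iff]
    rintro v ⟨hva, hvi⟩
    simp only [Submodule.mem_bot]
    have hvo : ∀ s ∈ Sa, dotProduct s v = 0 := by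
      intro s hs
      have h := hUiUa hvi s (Submodule.subset_span hs)
      rw [show dotProduct s v = B s v from (hBapp s v).symm]
      exact h
    rcases Submodule.mem_span_set.mp hva with ⟨l, hsupp, rfl⟩
    have hl : l = 0 := by
      ext s₀
      by_cases hs₀ : s₀ ∈ l.support
      · have h1 : dotProduct (l.sum fun mi r => r • mi) s₀ = l s₀ *
            dotProduct s₀ s₀ := by
          rw [← hBapp, Finsupp.sum, map_sum, LinearMap.sum_apply]
          rw [Finset.sum_eq_single s₀]
          · rw [map_smul, LinearMap.smul_apply, smul_eq_mul, hBapp]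
          · intro s hs hne
            rw [map_smul, LinearMap.smul_apply, smul_eq_mul, hBapp,
              hdist s (Or.inl (hsupp hs)) s₀ (Or.inl (hsupp hs₀)) hne, mul_zero]
          · intro h; exact absurd hs₀ h
        have h2 : dotProduct (l.sum fun mi r => r • mi) s₀ = 0 := by
          rw [dotProduct_comm]
          exact hvo s₀ (hsupp hs₀)
        have hani : dotProduct s₀ s₀ ≠ 0 := by
          rcases hsupp hs₀ with ⟨j, h, hj⟩
          rw [h]; exact hj
        have h3 := h1.symm.trans h2
        rcases mul_eq_zero.mp h3 with h | h
        · simpa using h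
        · exact absurd h hani
      · simpa using Finsupp.notMem_support_iff.mp hs₀
    rw [hl, Finsupp.sum_zero_index]
  -- rank computation
  have hFD : FiniteDimensional k (Fin d → k) := inferInstance
  have hrank : A.rank = p + q := by
    rw [Matrix.rank_eq_finrank_span_cols]
    have hcols : Set.range A.col = Sa ∪ Si := by
      ext v
      constructor
      · rintro ⟨j, rfl⟩
        by_cases hj : dotProduct (fun i => A i j) (fun i => A i j) = 0
        · exact Or.inr ⟨j, rfl, hj⟩
        · exact Or.inl ⟨j, rfl, hj⟩
      · rintro (⟨j, rfl, -⟩ | ⟨j, rfl, -⟩) <;> exact ⟨j, rfl⟩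
    rw [hcols, Submodule.span_union]
    have := Submodule.finrank_sup_add_finrank_inf_eq Ua Ui
    rw [hdisj, finrank_bot, add_zero] at this
    rw [this, hp, hq]
  have hd : finrank k (Fin d → k) = d := by simp
  have hqd : finrank k (B.orthogonal Ui) = d - q := by
    rw [LinearMap.BilinForm.finrank_orthogonal hnd, hd, hq]
  have hle2 : p + q ≤ d - q := by
    calc p + q = finrank k (Ua ⊔ Ui : Submodule k (Fin d → k)) := by
          have := Submodule.finrank_sup_add_finrank_inf_eq Ua Ui
          rw [hdisj, finrank_bot, add_zero] at this
          rw [this, hp, hq]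
      _ ≤ finrank k (B.orthogonal Ui) := Submodule.finrank_mono hsupUi
      _ = d - q := hqd
  have hqled : q ≤ d := by
    rw [hq]
    have := Submodule.finrank_le Ui
    rwa [hd] at this
  refine ⟨hrank.symm, Matrix.rank_le_width A, by omega⟩
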